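/- Let R be a commutative ring, let S be a commutative R-algebra, and let G be a finite group acting on S by R-algebra automorphisms such that the R-algebra homomorphism S ⊗_R S → ∏_{γ∈G} S, a ⊗ b ↦ (a·γ(b))_{γ∈G}, is bijective. Then for every integer l ≥ 2, the R-algebra homomorphism from the l-fold tensor product S^{⊗_R l} to the product ∏_{(g_2,…,g_l)∈G^{l−1}} S which sends a_1 ⊗ a_2 ⊗ ⋯ ⊗ a_l to the family ( a_1 · g_2(a_2) ⋯ g_l(a_l) )_{(g_2,…,g_l)} is bijective. -/

import Mathlib

open scoped TensorProduct
open PiTensorProduct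

section Aux

variable {R : Type*} [CommRing R] {S : Type*} [CommRing S] [Algebra R S]
  {G : Type*} [Group G] [Fintype G] (ρ : G →* (S ≃ₐ[R] S))

/-- The canonical linear map `S^{⊗(n+1)} → ((Fin n → G) → S)`. -/
noncomputable def psiAux (n : ℕ) : (⨂[R] _ : Fin (n + 1), S) →ₗ[R] ((Fin n → G) → S) :=
  PiTensorProduct.lift <| MultilinearMap.pi fun g =>
    (MultilinearMap.mkPiAlgebra R (Fin (n + 1)) S).compLinearMap
      (Fin.cons LinearMap.id fun j => (ρ (g j)).toLinearMap)

omit [Fintype G] in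
lemma psiAux_tprod (n : ℕ) (a : Fin (n + 1) → S) :
    psiAux ρ n (tprod R a) = fun g => a 0 * ∏ j : Fin n, ρ (g j) (a j.succ) := by
  funext g
  simp only [psiAux, PiTensorProduct.lift.tprod, MultilinearMap.pi_apply,
    MultilinearMap.compLinearMap_apply, MultilinearMap.mkPiAlgebra_apply]
  rw [Fin.prod_univ_succ]
  simp

/-- Curry/snoc equivalence used in the induction step. -/
noncomputable def snocEquivAux (n : ℕ) :
    ((Fin n → G) → (G → S)) ≃ₗ[R] ((Fin (n + 1) → G) → S) where
  toFun F := fun g => F (g ∘ Fin.castSucc) (g (Fin.last n))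
  map_add' _ _ := rfl
  map_smul' _ _ := rfl
  invFun F := fun g γ => F (Fin.snoc g γ)
  left_inv F := by
    funext g γ
    simp [Fin.snoc_comp_castSucc]
  right_inv F := by
    funext g
    simp [Fin.snoc_comp_castSucc]
    congr 1
    exact Fin.snoc_init_self g

end Aux

section Main

variable {R : Type*} [CommRing R] {S : Type*} [CommRing S] [Algebra R S]
  {G : Type*} [Group G] [Fintype G] (ρ : G →* (S ≃ₐ[R] S))

lemma psiAux_bijective (Φ : S ⊗[R] S →ₐ[R] (G → S))
    (hΦ : ∀ a b : S, Φ (a ⊗ₜ[R] b) = fun γ => a * ρ γ b)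
    (hΦbij : Function.Bijective Φ) (n : ℕ) :
    Function.Bijective (psiAux (R := R) (S := S) ρ n) := by
  classical
  induction n with
  | zero =>
    let E0 : (⨂[R] _ : Fin 1, S) ≃ₗ[R] ((Fin 0 → G) → S) :=
      (PiTensorProduct.subsingletonEquiv (0 : Fin 1)).trans
        (LinearEquiv.funUnique (Fin 0 → G) R S).symm
    have key : psiAux (R := R) (S := S) ρ 0 = E0.toLinearMap := by
      apply PiTensorProduct.ext
      apply MultilinearMap.ext
      intro a
      simp [psiAux_tprod, E0, LinearEquiv.funUnique]
      rfl
    rw [key]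
    exact E0.bijective
  | succ n ih =>
    let ψe : (⨂[R] _ : Fin (n + 1), S) ≃ₗ[R] ((Fin n → G) → S) :=
      LinearEquiv.ofBijective _ ih
    let Φe : (S ⊗[R] S) ≃ₗ[R] (G → S) := LinearEquiv.ofBijective Φ.toLinearMap hΦbij
    let E1 : (⨂[R] _ : Fin (n + 2), S) ≃ₗ[R]
        ((⨂[R] _ : Fin (n + 1), S) ⊗[R] (⨂[R] _ : Fin 1, S)) :=
      (PiTensorProduct.reindex R (fun _ : Fin (n + 2) => S) (finSumFinEquiv (m := n + 1) (n := 1)).symm).trans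
        (PiTensorProduct.tmulEquiv R S).symm
    let E2 := TensorProduct.congr ψe (PiTensorProduct.subsingletonEquiv (R := R) (s := fun _ : Fin 1 => S) (0 : Fin 1))
    let E3 := TensorProduct.comm R ((Fin n → G) → S) S
    let E4 := TensorProduct.piRight R R S (fun _ : Fin n → G => S)
    let E5 := LinearEquiv.piCongrRight fun _ : Fin n → G =>
      (TensorProduct.comm R S S).trans Φe
    let big : (⨂[R] _ : Fin (n + 2), S) ≃ₗ[R] ((Fin (n + 1) → G) → S) :=
      E1.trans (E2.trans (E3.trans (E4.trans (E5.trans (snocEquivAux (R := R) n)))))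
    have key : psiAux (R := R) (S := S) ρ (n + 1) = big.toLinearMap := by
      apply PiTensorProduct.ext
      apply MultilinearMap.ext
      intro a
      funext g
      have lhs : psiAux (R := R) (S := S) ρ (n + 1) (tprod R a) g =
          a 0 * ∏ j : Fin (n + 1), ρ (g j) (a j.succ) := by
        rw [psiAux_tprod]
      simp only [LinearMap.compMultilinearMap_apply]
      rw [lhs]
      simp only [big, E1, E2, E3, E4, E5, LinearEquiv.coe_coe, LinearEquiv.coe_toLinearMap, LinearEquiv.trans_apply,
        PiTensorProduct.reindex_tprod, Equiv.symm_symm,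
        PiTensorProduct.tmulEquiv_symm_apply, TensorProduct.congr_tmul,
        PiTensorProduct.subsingletonEquiv_apply_tprod,
        LinearEquiv.ofBijective_apply, TensorProduct.comm_tmul,
        TensorProduct.piRight_apply, TensorProduct.piRightHom_tmul,
        LinearEquiv.piCongrRight_apply, LinearEquiv.trans_apply,
        snocEquivAux, LinearEquiv.coe_mk, ψe, Φe]
      rw [psiAux_tprod]
      simp only [LinearEquiv.coe_mk, LinearMap.coe_mk, AddHom.coe_mk, LinearEquiv.piCongrRight_apply,
        LinearEquiv.trans_apply, TensorProduct.comm_tmul]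
      change _ = Φ.toLinearMap _ _
      simp only [Function.comp_apply, AlgHom.toLinearMap_apply, hΦ]
      rw [Fin.prod_univ_castSucc, ← mul_assoc]
      have h1 : (finSumFinEquiv (m := n + 1) (n := 1) (Sum.inl 0) : Fin (n + 2)) = 0 := rfl
      have h2 : ∀ j : Fin n,
          (finSumFinEquiv (m := n + 1) (n := 1) (Sum.inl j.succ) : Fin (n + 2)) =
            (j.castSucc).succ := fun j => by ext; simp
      have h3 : (finSumFinEquiv (m := n + 1) (n := 1) (Sum.inr 0) : Fin (n + 2)) =
          (Fin.last n).succ := by ext; simp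
      rw [h1, h3]
      congr 2
    rw [key]
    exact big.bijective

end Main

open scoped TensorProduct in
/-- Affine form of the trivialization `G^{l-1} × X ≅ X ×_Y ⋯ ×_Y X` for a principal
`G`-bundle: if `G` is a finite group acting on the commutative `R`-algebra `S` by
`R`-algebra automorphisms such that `S ⊗_R S → ∏_{γ ∈ G} S`, `a ⊗ b ↦ (a·γ(b))_γ`,
is bijective, then for every `l ≥ 2` the `R`-algebra map
`S^{⊗_R l} → ∏_{(g₂,…,g_l) ∈ G^{l-1}} S`,
`a₁ ⊗ ⋯ ⊗ a_l ↦ (a₁·g₂(a₂)⋯g_l(a_l))`, is bijective. -/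
theorem stmt_11 (R : Type*) [CommRing R] (S : Type*) [CommRing S] [Algebra R S]
    (G : Type*) [Group G] [Fintype G] (ρ : G →* (S ≃ₐ[R] S))
    (Φ : S ⊗[R] S →ₐ[R] (G → S))
    (hΦ : ∀ a b : S, Φ (a ⊗ₜ[R] b) = fun γ => a * ρ γ b)
    (hΦbij : Function.Bijective Φ)
    (l : ℕ) (hl : 2 ≤ l)
    (Ψ : (⨂[R] _ : Fin l, S) →ₐ[R] ((Fin (l - 1) → G) → S))
    (hΨ : ∀ a : Fin l → S,
      Ψ (PiTensorProduct.tprod R a) =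
        fun g => a ⟨0, by omega⟩ *
          ∏ i : Fin (l - 1), ρ (g i) (a (Fin.cast (by omega) i.succ))) :
    Function.Bijective Ψ := by
  obtain ⟨n, rfl⟩ : ∃ n, l = n + 1 := ⟨l - 1, by omega⟩
  have hbij := psiAux_bijective ρ Φ hΦ hΦbij n
  have key : Ψ.toLinearMap = psiAux (R := R) (S := S) ρ n := by
    apply PiTensorProduct.ext
    apply MultilinearMap.ext
    intro a
    simp only [LinearMap.compMultilinearMap_apply, AlgHom.toLinearMap_apply]
    refine (hΨ a).trans ?_
    refine Eq.trans ?_ (psiAux_tprod (R := R) (S := S) ρ n a).symm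
    funext g
    congr 1
  have : ⇑Ψ = ⇑(psiAux (R := R) (S := S) ρ n) := by
    funext x
    exact DFunLike.congr_fun key x
  rw [this]
  exact hbij
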